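/- Let A be an algebra obtained by the Cayley-Dickson process over K (char K ≠ 2) with trace form T_C, and let m be a positive integer. If the quadratic form (m+1) × T_C is anisotropic over K, then the sublevel of A satisfies s̲(A) ≥ m+1; equivalently, if s̲(A) < m+1 then (m+1) × T_C is isotropic. -/

import Mathlib

/-- An algebra `A` of dimension `2 ^ t` over a field `K` obtained by the Cayley-Dickson
process: it has a basis `{1, f₂, …, f_q}`, `q = 2 ^ t` (indexed here by
`Option (Fin (2 ^ t - 1))`, with `none` corresponding to the unit `1`), such that
`fᵢ² = αᵢ • 1` for nonzero scalars `αᵢ` and `fᵢ fⱼ = -fⱼ fᵢ` for `i ≠ j`.  The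
multiplication is not assumed associative, but is `K`-bilinear. -/
structure CayleyDickson (K : Type) [Field K] (A : Type) [NonAssocRing A] [Module K A]
    (t : ℕ) : Type where
  smul_mul : ∀ (c : K) (x y : A), (c • x) * y = c • (x * y)
  mul_smul : ∀ (c : K) (x y : A), x * (c • y) = c • (x * y)
  b : Module.Basis (Option (Fin (2 ^ t - 1))) K A
  bOne : b none = 1
  α : Fin (2 ^ t - 1) → K
  α_ne_zero : ∀ i, α i ≠ 0
  sq : ∀ i, b (some i) * b (some i) = α i • (1 : A)
  anticomm : ∀ i j, i ≠ j → b (some i) * b (some j) = -(b (some j) * b (some i))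

/-- The level of a (not necessarily associative) unital ring `A`: the least `n` (in `ℕ∞`)
such that `-1` is a sum of `n` squares in `A`. -/
noncomputable def naLevel (A : Type) [NonAssocRing A] : ℕ∞ :=
  sInf {e : ℕ∞ | ∃ n : ℕ, e = n ∧ ∃ f : Fin n → A, ∑ i, f i * f i = -1}

/-- The sublevel of a (not necessarily associative) unital ring `A`: the least `n` (in
`ℕ∞`) such that `0` is a sum of `n + 1` nonzero squares in `A`. -/
noncomputable def naSublevel (A : Type) [NonAssocRing A] : ℕ∞ :=
  sInf {e : ℕ∞ | ∃ n : ℕ, e = n ∧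
    ∃ f : Fin (n + 1) → A, (∀ i, f i * f i ≠ 0) ∧ ∑ i, f i * f i = 0}

/-- If the quadratic form `(m + 1) × T_C` (with `T_C = <1, α₂, …, α_q>`
the trace form of the Cayley-Dickson algebra `A`) is anisotropic over `K`, then the
sublevel of `A` satisfies `s̲(A) ≥ m + 1`. -/
lemma repr_mul_self_none {K A : Type} [Field K] [NonAssocRing A] [Module K A] {t : ℕ}
    (hchar : (2 : K) ≠ 0) (CD : CayleyDickson K A t) (x : A) :
    CD.b.repr (x * x) none =
      (CD.b.repr x none) ^ 2 + ∑ i, CD.α i * (CD.b.repr x (some i)) ^ 2 := by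
  classical
  set c : Option (Fin (2 ^ t - 1)) → K := fun k => CD.b.repr x k with hc
  have hx : ∑ k, c k • CD.b k = x := CD.b.sum_repr x
  have hxx : x * x = ∑ k, ∑ l, (c k * c l) • (CD.b k * CD.b l) := by
    conv_lhs => rw [← hx]
    rw [Finset.sum_mul]
    refine Finset.sum_congr rfl fun k _ => ?_
    rw [Finset.mul_sum]
    refine Finset.sum_congr rfl fun l _ => ?_
    rw [CD.smul_mul, CD.mul_smul, smul_smul]
  set r : Option (Fin (2 ^ t - 1)) → Option (Fin (2 ^ t - 1)) → K :=
    fun k l => CD.b.repr (CD.b k * CD.b l) none with hr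
  have hrepr : CD.b.repr (x * x) none = ∑ k, ∑ l, (c k * c l) * r k l := by
    rw [hxx]
    simp [map_sum, Finsupp.finset_sum_apply, hr]
  set dd : Option (Fin (2 ^ t - 1)) → K := fun k => k.elim 2 (fun i => 2 * CD.α i) with hdd
  have key : ∀ k l, r k l + r l k = (if k = l then dd k else 0) := by
    rintro (_ | i) (_ | j)
    · have h1 : CD.b none * CD.b none = CD.b none := by rw [CD.bOne, mul_one]
      simp [hr, hdd, h1, two_mul]
      norm_num
    · simp [hr, CD.bOne]
    · simp [hr, CD.bOne]
    · by_cases hij : i = j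
      · subst hij
        simp [hr, hdd, CD.sq, ← CD.bOne, two_mul, mul_comm]
      · have h1 := CD.anticomm i j hij
        simp [hr, h1, Option.some_inj, hij]
  set S : K := ∑ k, ∑ l, (c k * c l) * r k l with hS
  have hswap : (∑ k, ∑ l, (c l * c k) * r l k) = S := by rw [Finset.sum_comm]
  have h2 : 2 * S = 2 * ((c none) ^ 2 + ∑ i, CD.α i * (c (some i)) ^ 2) := by
    rw [two_mul]
    nth_rewrite 2 [← hswap]
    rw [hS, ← Finset.sum_add_distrib]
    have : ∀ k ∈ (Finset.univ : Finset (Option (Fin (2 ^ t - 1)))),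
        ((∑ l, (c k * c l) * r k l) + ∑ l, (c l * c k) * r l k)
        = c k * c k * dd k := by
      intro k _
      rw [← Finset.sum_add_distrib]
      have : ∀ l ∈ (Finset.univ : Finset (Option (Fin (2 ^ t - 1)))),
          ((c k * c l) * r k l + (c l * c k) * r l k)
          = (if k = l then c k * c k * dd k else 0) := by
        intro l _
        have := key k l
        by_cases hkl : k = l
        · subst hkl; rw [if_pos rfl]
          have hk : r k k + r k k = dd k := by simpa using key k k
          linear_combination (c k * c k) * hk
        · simp only [if_neg hkl]
          have hk := key k l
          rw [if_neg hkl] at hk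
          linear_combination (c k * c l) * hk
      rw [Finset.sum_congr rfl this]
      simp
    rw [Finset.sum_congr rfl this, Fintype.sum_option]
    simp only [hdd, Option.elim, mul_add, Finset.mul_sum]
    congr 1
    · ring
    · exact Finset.sum_congr rfl fun i _ => by ring
  have h3 := mul_left_cancel₀ hchar h2
  rw [hrepr]
  exact h3

theorem sublevel_ge_of_anisotropic (K A : Type) [Field K] [NonAssocRing A] [Module K A]
    (t m : ℕ) (hm : 0 < m) (hchar : (2 : K) ≠ 0) (CD : CayleyDickson K A t)
    (han : ∀ v : Fin (m + 1) → K × (Fin (2 ^ t - 1) → K),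
      ∑ j, ((v j).1 ^ 2 + ∑ i, CD.α i * (v j).2 i ^ 2) = 0 → v = 0) :
    ((m + 1 : ℕ) : ℕ∞) ≤ naSublevel A := by
  unfold naSublevel
  classical
  refine le_sInf fun e he => ?_
  obtain ⟨n, rfl, f, hf0, hfsum⟩ := he
  rw [Nat.cast_le]
  by_contra h
  push_neg at h
  have hnm : n + 1 ≤ m + 1 := by omega
  set coords : A → K × (Fin (2 ^ t - 1) → K) :=
    fun x => (CD.b.repr x none, fun i => CD.b.repr x (some i)) with hcoords
  set w : ℕ → K × (Fin (2 ^ t - 1) → K) :=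
    fun j => if hj : j < n + 1 then coords (f ⟨j, hj⟩) else 0 with hw
  set v : Fin (m + 1) → K × (Fin (2 ^ t - 1) → K) := fun j => w j.val with hv
  set T : K × (Fin (2 ^ t - 1) → K) → K :=
    fun p => p.1 ^ 2 + ∑ i, CD.α i * p.2 i ^ 2 with hT
  have hTzero : T 0 = 0 := by simp [hT]
  have hTx : ∀ x : A, T (coords x) = CD.b.repr (x * x) none := by
    intro x
    rw [hT, hcoords, repr_mul_self_none hchar CD x]
  have hsum : ∑ j, ((v j).1 ^ 2 + ∑ i, CD.α i * (v j).2 i ^ 2) = 0 := by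
    have e1 : ∑ j : Fin (m + 1), ((v j).1 ^ 2 + ∑ i, CD.α i * (v j).2 i ^ 2)
        = ∑ j ∈ Finset.range (m + 1), T (w j) := by
      rw [← Fin.sum_univ_eq_sum_range (fun j => T (w j)) (m + 1)]
    have e2 : ∑ j ∈ Finset.range (m + 1), T (w j)
        = ∑ j ∈ Finset.range (n + 1), T (w j) := by
      refine (Finset.sum_subset (Finset.range_subset_range.mpr hnm) ?_).symm
      intro j _ hj
      rw [Finset.mem_range, not_lt] at hj
      rw [hw]
      simp only [dif_neg (by omega : ¬ j < n + 1)]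
      exact hTzero
    have e3 : ∑ j ∈ Finset.range (n + 1), T (w j)
        = ∑ j : Fin (n + 1), T (coords (f j)) := by
      rw [← Fin.sum_univ_eq_sum_range (fun j => T (w j)) (n + 1)]
      refine Finset.sum_congr rfl fun j _ => ?_
      rw [hw]
      simp only [dif_pos j.isLt, Fin.eta]
    have e4 : ∑ j : Fin (n + 1), T (coords (f j)) = 0 := by
      have : ∑ j : Fin (n + 1), CD.b.repr (f j * f j) none
          = CD.b.repr (∑ j, f j * f j) none := by
        rw [map_sum]
        exact (Finsupp.finset_sum_apply _ _ _).symm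
      simp only [hTx]
      rw [this, hfsum, map_zero, Finsupp.coe_zero, Pi.zero_apply]
    rw [e1, e2, e3, e4]
  have hv0 := congrFun (han v hsum) ⟨0, by omega⟩
  have h0n : (0 : ℕ) < n + 1 := Nat.succ_pos n
  have hw0 : w 0 = coords (f ⟨0, h0n⟩) := by rw [hw]; simp [dif_pos h0n]
  have : coords (f ⟨0, h0n⟩) = 0 := by
    rw [← hw0]
    exact hv0
  have hrepr0 : CD.b.repr (f ⟨0, h0n⟩) = 0 := by
    ext k
    rcases k with _ | i
    · exact congrArg Prod.fst this
    · exact congrFun (congrArg Prod.snd this) i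
  have hf00 : f ⟨0, h0n⟩ = 0 := by
    have := CD.b.repr.map_eq_zero_iff.mp hrepr0
    exact this
  exact hf0 ⟨0, h0n⟩ (by rw [hf00, mul_zero])
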